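/- Let q(t) = exp(tH)·I_{n,k} with H = [[A, -Bᵀ],[B, 0]] skew-symmetric as above, let [I_{n,k}, q(1)] = UR be a (compact) QR decomposition with U ∈ ℝ^{n×2k} having orthonormal columns, and suppose span{q(0)} ∩ span{q(1)} = {0}. Then φ(t) := Uᵀq(t) satisfies U·φ(t) = q(t) for all t ∈ [0,1], and φ(t) has orthonormal columns for each t. -/

import Mathlib

open Matrix NormedSpace
open scoped Nat

/-- The column span of a matrix. -/
def colSpan {m' k' : Type*} [Fintype k'] (M : Matrix m' k' ℝ) : Submodule ℝ (m' → ℝ) :=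
  LinearMap.range M.mulVecLin


/-- If `M * P = P * N` then `exp M * P = P * exp N`. -/
lemma exp_intertwine {n p : Type*} [Fintype n] [DecidableEq n] [Fintype p] [DecidableEq p]
    (M : Matrix n n ℝ) (N : Matrix p p ℝ) (P : Matrix n p ℝ) (h : M * P = P * N) :
    exp M * P = P * exp N := by
  letI : NormedAddCommGroup (Matrix n n ℝ) := Matrix.linftyOpNormedAddCommGroup
  letI : NormedRing (Matrix n n ℝ) := Matrix.linftyOpNormedRing
  letI : NormedAlgebra ℝ (Matrix n n ℝ) := Matrix.linftyOpNormedAlgebra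
  letI : NormedAddCommGroup (Matrix p p ℝ) := Matrix.linftyOpNormedAddCommGroup
  letI : NormedRing (Matrix p p ℝ) := Matrix.linftyOpNormedRing
  letI : NormedAlgebra ℝ (Matrix p p ℝ) := Matrix.linftyOpNormedAlgebra
  letI : NormedAddCommGroup (Matrix n p ℝ) := Matrix.linftyOpNormedAddCommGroup
  have hpow : ∀ j : ℕ, M ^ j * P = P * N ^ j := by
    intro j
    induction j with
    | zero => simp
    | succ j ih =>
        rw [pow_succ, Matrix.mul_assoc, h, ← Matrix.mul_assoc, ih, Matrix.mul_assoc, ← pow_succ]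
  have hsM : Summable fun j : ℕ => (j !⁻¹ : ℝ) • M ^ j := expSeries_summable' (𝕂 := ℝ) M
  have hsN : Summable fun j : ℕ => (j !⁻¹ : ℝ) • N ^ j := expSeries_summable' (𝕂 := ℝ) N
  let f : Matrix n n ℝ →ₗ[ℝ] Matrix n p ℝ :=
    { toFun := fun X => X * P
      map_add' := fun X Y => Matrix.add_mul X Y P
      map_smul' := fun c X => Matrix.smul_mul c X P }
  let g : Matrix p p ℝ →ₗ[ℝ] Matrix n p ℝ :=
    { toFun := fun Y => P * Y
      map_add' := fun X Y => Matrix.mul_add P X Y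
      map_smul' := fun c X => (Matrix.mul_smul P c X) }
  rw [exp_eq_tsum (𝕂 := ℝ), exp_eq_tsum (𝕂 := ℝ)]
  calc (∑' j : ℕ, (j !⁻¹ : ℝ) • M ^ j) * P
      = f.toContinuousLinearMap (∑' j : ℕ, (j !⁻¹ : ℝ) • M ^ j) := rfl
    _ = ∑' j : ℕ, f.toContinuousLinearMap ((j !⁻¹ : ℝ) • M ^ j) :=
        f.toContinuousLinearMap.map_tsum hsM
    _ = ∑' j : ℕ, g.toContinuousLinearMap ((j !⁻¹ : ℝ) • N ^ j) := by
        refine tsum_congr fun j => ?_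
        show ((j !⁻¹ : ℝ) • M ^ j) * P = P * ((j !⁻¹ : ℝ) • N ^ j)
        rw [Matrix.smul_mul, hpow j, Matrix.mul_smul]
    _ = g.toContinuousLinearMap (∑' j : ℕ, (j !⁻¹ : ℝ) • N ^ j) :=
        (g.toContinuousLinearMap.map_tsum hsN).symm
    _ = P * ∑' j : ℕ, (j !⁻¹ : ℝ) • N ^ j := rfl

lemma colSpan_mul_le {m' p' k' : Type*} [Fintype p'] [Fintype k'] (X : Matrix m' p' ℝ)
    (Y : Matrix p' k' ℝ) : colSpan (X * Y) ≤ colSpan X := by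
  rw [colSpan, colSpan, Matrix.mulVecLin_mul]
  exact LinearMap.range_comp_le_range _ _

/-- Corollary of the 2k-embedding theorem: with
`[q(0), q(1)] = U R` a compact QR decomposition and trivially intersecting spans,
`φ(t) = Uᵀ q(t)` satisfies `U φ(t) = q(t)` and has orthonormal columns for all
`t ∈ [0,1]`. -/
theorem flag_2k_coordinates {k m : ℕ} (hk : 0 < k) (hkm : k < m)
    (A : Matrix (Fin k) (Fin k) ℝ) (hA : Aᵀ = -A)
    (B : Matrix (Fin m) (Fin k) ℝ)
    (H : Matrix (Fin k ⊕ Fin m) (Fin k ⊕ Fin m) ℝ)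
    (hH : H = Matrix.fromBlocks A (-Bᵀ) B 0)
    (Ink : Matrix (Fin k ⊕ Fin m) (Fin k) ℝ)
    (hInk : Ink = Matrix.of fun i j => if i = Sum.inl j then (1 : ℝ) else 0)
    (q : ℝ → Matrix (Fin k ⊕ Fin m) (Fin k) ℝ)
    (hq : ∀ t, q t = NormedSpace.exp (t • H) * Ink)
    (hdisj : colSpan (q 0) ⊓ colSpan (q 1) = ⊥)
    (U : Matrix (Fin k ⊕ Fin m) (Fin k ⊕ Fin k) ℝ)
    (R : Matrix (Fin k ⊕ Fin k) (Fin k ⊕ Fin k) ℝ)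
    (hQR : Matrix.fromCols (q 0) (q 1) = U * R)
    (hUorth : Uᵀ * U = 1) :
    ∀ t ∈ Set.Icc (0 : ℝ) 1,
      U * (Uᵀ * q t) = q t ∧ (Uᵀ * q t)ᵀ * (Uᵀ * q t) = 1 := by
  have hInk' : Ink = fromRows (1 : Matrix (Fin k) (Fin k) ℝ) (0 : Matrix (Fin m) (Fin k) ℝ) := by
    rw [hInk]
    ext i j
    cases i with
    | inl i => simp [Matrix.one_apply]
    | inr i => simp
  have hq0 : q 0 = Ink := by
    rw [hq 0, zero_smul, exp_zero, Matrix.one_mul]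
  have hHT : Hᵀ = -H := by
    rw [hH, Matrix.fromBlocks_transpose, hA, Matrix.transpose_neg, Matrix.transpose_transpose,
      Matrix.transpose_zero]
    ext i j
    cases i <;> cases j <;> simp [Matrix.fromBlocks]
  have hqorth : ∀ t : ℝ, (q t)ᵀ * q t = 1 := by
    intro t
    have hsk : (t • H)ᵀ = -(t • H) := by rw [Matrix.transpose_smul, hHT, smul_neg]
    have h1 : exp (-(t • H)) * exp (t • H) = 1 := by
      rw [← Matrix.exp_add_of_commute _ _ ((Commute.refl (t • H)).neg_left),
        neg_add_cancel, exp_zero]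
    rw [hq t, Matrix.transpose_mul, ← Matrix.exp_transpose, hsk, Matrix.mul_assoc,
      ← Matrix.mul_assoc (exp (-(t • H))), h1, Matrix.one_mul, hInk',
      Matrix.transpose_fromRows, Matrix.fromCols_mul_fromRows]
    simp
  set P : Matrix (Fin k ⊕ Fin m) (Fin k ⊕ Fin k) ℝ := fromCols Ink (H * Ink) with hP
  set C : Matrix (Fin k ⊕ Fin k) (Fin k ⊕ Fin k) ℝ := fromBlocks 0 (-(Bᵀ * B)) 1 A with hC
  have hHInk : H * Ink = fromRows A B := by
    rw [hH, hInk', Matrix.fromBlocks_mul_fromRows]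
    simp
  have hHP : H * P = P * C := by
    rw [hP, hC, Matrix.mul_fromCols, Matrix.fromCols_mul_fromBlocks]
    congr 1
    · simp
    rw [hHInk, hH, Matrix.fromBlocks_mul_fromRows, hInk', Matrix.fromRows_mul,
      Matrix.fromRows_mul]
    ext i j
    cases i <;> cases j <;>
      simp only [Matrix.fromRows_mul, Matrix.one_mul, Matrix.zero_mul, Matrix.mul_one, Matrix.mul_zero,
        Matrix.fromBlocks_apply₁₁, Matrix.fromBlocks_apply₁₂, Matrix.fromBlocks_apply₂₁,
        Matrix.fromBlocks_apply₂₂, Matrix.fromCols_apply_inl, Matrix.fromCols_apply_inr,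
        Matrix.fromRows_apply_inl, Matrix.fromRows_apply_inr, Matrix.add_apply,
        Matrix.neg_apply, Matrix.sub_apply, Matrix.neg_mul, Matrix.zero_apply] <;>
      ring
  have hkey : ∀ t : ℝ, exp (t • H) * P = P * exp (t • C) := by
    intro t
    refine exp_intertwine _ _ _ ?_
    rw [Matrix.smul_mul, hHP, Matrix.mul_smul]
  have hPE : P * fromRows (1 : Matrix (Fin k) (Fin k) ℝ) (0 : Matrix (Fin k) (Fin k) ℝ) = Ink := by
    rw [hP, Matrix.fromCols_mul_fromRows]
    simp
  have hqP : ∀ t : ℝ, q t = P * (exp (t • C) *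
      fromRows (1 : Matrix (Fin k) (Fin k) ℝ) (0 : Matrix (Fin k) (Fin k) ℝ)) := by
    intro t
    rw [hq t, ← hPE, ← Matrix.mul_assoc, hkey t, Matrix.mul_assoc]
  have hrank : ∀ t : ℝ, Module.finrank ℝ (colSpan (q t)) = k := by
    intro t
    have hinj : Function.Injective (q t).mulVecLin := by
      rw [← LinearMap.ker_eq_bot]
      refine (Submodule.eq_bot_iff _).2 fun v hv => ?_
      have hv' : q t *ᵥ v = 0 := hv
      have h2 : ((q t)ᵀ * q t) *ᵥ v = 0 := by
        rw [← Matrix.mulVec_mulVec, hv', Matrix.mulVec_zero]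
      rwa [hqorth t, Matrix.one_mulVec] at h2
    rw [colSpan, LinearMap.finrank_range_of_inj hinj, Module.finrank_fin_fun]
  have hsup : Module.finrank ℝ ↑(colSpan (q 0) ⊔ colSpan (q 1)) = k + k := by
    have h := Submodule.finrank_sup_add_finrank_inf_eq (colSpan (q 0)) (colSpan (q 1))
    rw [hdisj, hrank 0, hrank 1] at h
    simpa using h
  have hVle : colSpan (q 0) ⊔ colSpan (q 1) ≤ colSpan P := by
    refine sup_le ?_ ?_
    · rw [hq0, ← hPE]
      exact colSpan_mul_le _ _
    · have h := colSpan_mul_le P (exp ((1 : ℝ) • C) *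
        fromRows (1 : Matrix (Fin k) (Fin k) ℝ) (0 : Matrix (Fin k) (Fin k) ℝ))
      rwa [← hqP 1] at h
  have hPrank : Module.finrank ℝ (colSpan P) ≤ k + k := by
    have h1 := LinearMap.finrank_range_le P.mulVecLin
    exact le_trans h1 (by simp [Module.finrank_pi])
  have hPV : colSpan (q 0) ⊔ colSpan (q 1) = colSpan P :=
    Submodule.eq_of_le_of_finrank_le hVle (by rw [hsup]; exact hPrank)
  have hVU : colSpan (q 0) ⊔ colSpan (q 1) ≤ colSpan U := by
    have hCU : colSpan (fromCols (q 0) (q 1)) ≤ colSpan U := by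
      rw [hQR]
      exact colSpan_mul_le _ _
    have h0 : q 0 = fromCols (q 0) (q 1) *
        fromRows (1 : Matrix (Fin k) (Fin k) ℝ) (0 : Matrix (Fin k) (Fin k) ℝ) := by
      rw [Matrix.fromCols_mul_fromRows]; simp
    have h1 : q 1 = fromCols (q 0) (q 1) *
        fromRows (0 : Matrix (Fin k) (Fin k) ℝ) (1 : Matrix (Fin k) (Fin k) ℝ) := by
      rw [Matrix.fromCols_mul_fromRows]; simp
    refine sup_le (le_trans ?_ hCU) (le_trans ?_ hCU)
    · have h := colSpan_mul_le (fromCols (q 0) (q 1))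
        (fromRows (1 : Matrix (Fin k) (Fin k) ℝ) (0 : Matrix (Fin k) (Fin k) ℝ))
      rwa [← h0] at h
    · have h := colSpan_mul_le (fromCols (q 0) (q 1))
        (fromRows (0 : Matrix (Fin k) (Fin k) ℝ) (1 : Matrix (Fin k) (Fin k) ℝ))
      rwa [← h1] at h
  have hle : ∀ t : ℝ, colSpan (q t) ≤ colSpan U := by
    intro t
    refine le_trans ?_ (le_trans (le_of_eq hPV.symm) hVU)
    have h := colSpan_mul_le P (exp (t • C) *
      fromRows (1 : Matrix (Fin k) (Fin k) ℝ) (0 : Matrix (Fin k) (Fin k) ℝ))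
    rwa [← hqP t] at h
  intro t _
  have hW : ∃ W : Matrix (Fin k ⊕ Fin k) (Fin k) ℝ, q t = U * W := by
    have hcols : ∀ j, ∃ v, U *ᵥ v = fun i => q t i j := by
      intro j
      have hmem : (fun i => q t i j) ∈ colSpan (q t) :=
        ⟨Pi.single j 1, by funext i; simp [Matrix.mulVecLin_apply]⟩
      exact hle t hmem
    choose v hv using hcols
    refine ⟨Matrix.of fun l j => v j l, ?_⟩
    ext i j
    have h := congrFun (hv j) i
    rw [Matrix.mul_apply, ← h]
    simp [Matrix.mulVec, dotProduct]
  obtain ⟨W, hWq⟩ := hW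
  have hmain : U * (Uᵀ * q t) = q t := by
    rw [hWq, ← Matrix.mul_assoc Uᵀ U W, hUorth, Matrix.one_mul]
  exact ⟨hmain, by rw [Matrix.transpose_mul, Matrix.transpose_transpose, Matrix.mul_assoc,
    hmain, hqorth t]⟩
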